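/- Let λ be a (nonnegative) Borel measure on ℝ and C > 0 a constant such that the Poisson integral satisfies ∫_ℝ y/((s−x)² + y²) dλ(s) ≤ C·y for every x ∈ ℝ and every y > 0. Then λ is the zero measure. -/

import Mathlib

open MeasureTheory

/-- If a nonnegative Borel measure `λ` on `ℝ` has Poisson integral
`∫ y/((s−x)² + y²) dλ(s)` bounded by `C·y` for every point `(x,y)` of the upper
half-plane, then `λ = 0`. -/
theorem poisson_integral_bounded_implies_measure_zero
    (lam : Measure ℝ) (C : ℝ) (hC : 0 < C)
    (hbd : ∀ x y : ℝ, 0 < y →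
      (∫⁻ s, ENNReal.ofReal (y / ((s - x) ^ 2 + y ^ 2)) ∂lam) ≤ ENNReal.ofReal (C * y)) :
    lam = 0 := by
  have hball : ∀ x y : ℝ, 0 < y → lam (Metric.ball x y) ≤ ENNReal.ofReal (2 * C * y ^ 2) := by
    intro x y hy
    have hmeas : Measurable fun s : ℝ => ENNReal.ofReal (y / ((s - x) ^ 2 + y ^ 2)) := by
      fun_prop
    have hlow : ENNReal.ofReal (y / (2 * y ^ 2)) * lam (Metric.ball x y)
        ≤ ∫⁻ s in Metric.ball x y, ENNReal.ofReal (y / ((s - x) ^ 2 + y ^ 2)) ∂lam := by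
      rw [← setLIntegral_const]
      refine setLIntegral_mono hmeas fun s hs => ?_
      apply ENNReal.ofReal_le_ofReal
      rw [Metric.mem_ball, Real.dist_eq] at hs
      have h1 : (s - x) ^ 2 + y ^ 2 ≤ 2 * y ^ 2 := by
        nlinarith [abs_nonneg (s - x), sq_abs (s - x)]
      exact div_le_div_of_nonneg_left hy.le (by positivity) h1
    have h2 : ENNReal.ofReal (y / (2 * y ^ 2)) * lam (Metric.ball x y) ≤ ENNReal.ofReal (C * y) :=
      le_trans hlow (le_trans (setLIntegral_le_lintegral _ _) (hbd x y hy))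
    have hc0 : (0:ℝ) < y / (2 * y ^ 2) := by positivity
    rw [mul_comm] at h2
    rw [← ENNReal.le_div_iff_mul_le (Or.inl (by simp [ENNReal.ofReal_pos, hc0]))
      (Or.inl ENNReal.ofReal_ne_top)] at h2
    calc lam (Metric.ball x y) ≤ ENNReal.ofReal (C * y) / ENNReal.ofReal (y / (2 * y ^ 2)) := h2
      _ = ENNReal.ofReal (2 * C * y ^ 2) := by
          rw [← ENNReal.ofReal_div_of_pos hc0]
          congr 1
          field_simp
  have hIcc : ∀ a L : ℝ, 0 < L → lam (Set.Icc a (a + L)) = 0 := by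
    intro a L hL
    have key : ∀ N : ℕ, 1 ≤ N → lam (Set.Icc a (a + L)) ≤ ENNReal.ofReal (2 * C * L ^ 2 / N) := by
      intro N hN
      have hNpos : (0:ℝ) < N := by exact_mod_cast hN
      set t : ℝ := L / N with ht
      have htpos : 0 < t := by positivity
      have hcover : Set.Icc a (a + L) ⊆
          ⋃ k ∈ Finset.range N, Metric.ball (a + (k + 1/2) * t) t := by
        intro x hx
        obtain ⟨hx1, hx2⟩ := hx
        set k : ℕ := min (N - 1) ⌊(x - a) / t⌋₊ with hk
        have hkN : k < N := by omega
        have hbounds : (k : ℝ) * t ≤ x - a ∧ x - a ≤ ((k : ℝ) + 1) * t := by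
          rcases le_or_gt (⌊(x - a) / t⌋₊) (N - 1) with h | h
          · have hke : k = ⌊(x - a) / t⌋₊ := by omega
            constructor
            · rw [hke, ← le_div_iff₀ htpos]
              exact Nat.floor_le (div_nonneg (by linarith) htpos.le)
            · rw [hke, ← div_le_iff₀ htpos]
              exact (Nat.lt_floor_add_one _).le
          · have hke : k = N - 1 := by omega
            have hNf : (N : ℝ) ≤ (x - a) / t := by
              refine le_trans ?_ (Nat.floor_le (div_nonneg (by linarith) htpos.le))
              exact_mod_cast (by omega : N ≤ ⌊(x - a) / t⌋₊)
            have hkc : (k : ℝ) = (N : ℝ) - 1 := by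
              rw [hke, Nat.cast_sub hN, Nat.cast_one]
            have hLt : (N : ℝ) * t = L := by rw [ht]; field_simp
            constructor
            · rw [hkc]
              nlinarith [(le_div_iff₀ htpos).mp hNf]
            · rw [hkc]; linarith
        refine Set.mem_iUnion₂.mpr ⟨k, Finset.mem_range.mpr hkN, ?_⟩
        rw [Metric.mem_ball, Real.dist_eq, abs_lt]
        obtain ⟨hb1, hb2⟩ := hbounds
        constructor <;> nlinarith
      calc lam (Set.Icc a (a + L)) ≤ ∑ k ∈ Finset.range N, lam (Metric.ball (a + (k + 1/2) * t) t) :=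
            le_trans (measure_mono hcover) (measure_biUnion_finset_le _ _)
        _ ≤ ∑ k ∈ Finset.range N, ENNReal.ofReal (2 * C * t ^ 2) :=
            Finset.sum_le_sum fun k _ => hball _ t htpos
        _ = N * ENNReal.ofReal (2 * C * t ^ 2) := by
            rw [Finset.sum_const, Finset.card_range, nsmul_eq_mul]
        _ = ENNReal.ofReal (2 * C * L ^ 2 / N) := by
            rw [← ENNReal.ofReal_natCast N, ← ENNReal.ofReal_mul (by positivity)]
            congr 1
            have hNne : (N:ℝ) ≠ 0 := hNpos.ne'
            rw [ht]
            field_simp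
    have htend : Filter.Tendsto (fun N : ℕ => ENNReal.ofReal (2 * C * L ^ 2 / N))
        Filter.atTop (nhds 0) := by
      rw [← ENNReal.ofReal_zero]
      apply ENNReal.tendsto_ofReal
      exact tendsto_const_div_atTop_nhds_zero_nat _
    have := ge_of_tendsto htend (Filter.eventually_atTop.mpr ⟨1, fun N hN => key N hN⟩)
    simpa using this
  have huniv : lam Set.univ = 0 := by
    have hsub : (Set.univ : Set ℝ) ⊆ ⋃ n : ℕ, Set.Icc (-(n+1) : ℝ) ((-(n+1)) + (2*n+2)) := by
      intro x _
      refine Set.mem_iUnion.mpr ⟨⌈|x|⌉₊, ?_⟩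
      have h := Nat.le_ceil |x|
      constructor
      · cases abs_cases x <;> push_cast <;> linarith
      · cases abs_cases x <;> push_cast <;> linarith
    have hle : lam Set.univ ≤ 0 :=
      calc lam Set.univ ≤ ∑' n : ℕ, lam (Set.Icc (-(n+1) : ℝ) ((-(n+1)) + (2*n+2))) :=
            le_trans (measure_mono hsub) (measure_iUnion_le _)
        _ = 0 := by simp only [fun n : ℕ => hIcc (-(n+1) : ℝ) (2*n+2) (by positivity)]; simp
    exact le_zero_iff.mp hle
  exact Measure.measure_univ_eq_zero.mp huniv
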